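/- The classical contraposition axiom (3) holds in base-extension semantics for S5: (φ→⊥)→(ψ→⊥) ⊩ ψ→φ, i.e., at every base ℬ and set of S5-modal relations 𝔯_A, if (φ→⊥)→(ψ→⊥) is valid at ℬ then ψ→φ is valid at ℬ. -/
import Mathlib


/-- A base rule: a finite set of premiss atoms and a conclusion atom. -/
abbrev Rule := Finset ℕ × ℕ

/-- A base is a collection of base rules. -/
abbrev Base := Set Rule

/-- Derivability of an atom in a base: closure of ∅ under the rules. -/
inductive Deriv (B : Base) : ℕ → Prop where
  | step (L : Finset ℕ) (p : ℕ) (mem : (L, p) ∈ B)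
      (prem : ∀ q ∈ L, Deriv B q) : Deriv B p

/-- A base is inconsistent iff every atom is derivable in it. -/
def Inconsistent (B : Base) : Prop := ∀ p : ℕ, Deriv B p

/-- Formulae of the multi-agent modal language over agents `A`. -/
inductive Form (A : Type) where
  | atom : ℕ → Form A
  | bot  : Form A
  | imp  : Form A → Form A → Form A
  | K    : A → Form A → Form A

/-- Negation abbreviation ¬φ := φ → ⊥. -/
def Form.neg {A : Type} (φ : Form A) : Form A := Form.imp φ Form.bot

/-- Validity at a base given a family of relations on bases. -/
def Valid {A : Type} (R : A → Base → Base → Prop) : Base → Form A → Prop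
  | B, .atom p => Deriv B p
  | B, .bot => ∀ p : ℕ, Deriv B p
  | B, .imp φ ψ => ∀ C : Base, B ⊆ C → Valid R C φ → Valid R C ψ
  | B, .K a φ => ∀ C : Base, R a B C → Valid R C φ

/-- Validity of φ at ℬ from a (nonempty) set of assumptions Γ. -/
def GammaValid {A : Type} (R : A → Base → Base → Prop)
    (Γ : Set (Form A)) (B : Base) (φ : Form A) : Prop :=
  ∀ C : Base, B ⊆ C → (∀ ψ ∈ Γ, Valid R C ψ) → Valid R C φ

def Euclidean {X : Sort*} (r : X → X → Prop) : Prop :=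
  ∀ x y z, r x y → r x z → r y z

/-- S5-modal relations on bases. -/
structure S5Rel (r : Base → Base → Prop) : Prop where
  incon_succ : ∀ B, Inconsistent B →
    (∃ C, r B C ∧ Inconsistent C) ∧ ∀ D, r B D → Inconsistent D
  con_succ : ∀ B, ¬ Inconsistent B → ∀ C, r B C → ¬ Inconsistent C
  zig : ∀ B C, r B C → ∀ D, B ⊆ D → ¬ Inconsistent D → ∃ E, C ⊆ E ∧ r D E
  zag : ∀ B C, r B C → ¬ Inconsistent C → ∀ D, D ⊆ B → ∃ E, E ⊆ C ∧ r D E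
  refl : ∀ B, r B B
  trans : ∀ B C D, r B C → r C D → r B D
  eucl : ∀ B C D, r B C → r B D → r C D

/-- Maximally-consistent bases. -/
def MaxCon (B : Base) : Prop :=
  ¬ Inconsistent B ∧ ∀ δ : Rule, δ ∈ B ∨ Inconsistent (insert δ B)

/-- A formula is valid iff it is valid at every base for every family of S5-modal relations. -/
def ValidAll {A : Type} (φ : Form A) : Prop :=
  ∀ R : A → Base → Base → Prop, (∀ a, S5Rel (R a)) → ∀ B : Base, Valid R B φ

theorem deriv_mono {B C : Base} (h : B ⊆ C) {p : ℕ} (hd : Deriv B p) : Deriv C p := by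
  induction hd with
  | step L p mem prem ih => exact Deriv.step L p (h mem) ih

theorem incon_mono {B C : Base} (h : B ⊆ C) (hB : Inconsistent B) : Inconsistent C :=
  fun p => deriv_mono h (hB p)

theorem exfalso_valid {A : Type} {R : A → Base → Base → Prop} (hR : ∀ a, S5Rel (R a))
    (φ : Form A) : ∀ B : Base, Inconsistent B → Valid R B φ := by
  induction φ with
  | atom p => exact fun B hB => hB p
  | bot => exact fun B hB => hB
  | imp α β ihα ihβ => exact fun B hB C hBC _ => ihβ C (incon_mono hBC hB)
  | K a α ih => exact fun B hB C hRC => ih C (((hR a).incon_succ B hB).2 C hRC)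

theorem valid_mono {A : Type} {R : A → Base → Base → Prop} (hR : ∀ a, S5Rel (R a))
    (φ : Form A) : ∀ B C : Base, B ⊆ C → Valid R B φ → Valid R C φ := by
  induction φ with
  | atom p => exact fun B C h hv => deriv_mono h hv
  | bot => exact fun B C h hv p => deriv_mono h (hv p)
  | imp α β ihα ihβ => exact fun B C h hv D hCD hα => hv D (h.trans hCD) hα
  | K a α ih => by_cases hFi : True
                · intro B C h hv F hF
                  by_cases hFi : Inconsistent F
                  · exact exfalso_valid hR α F hFi
                  · obtain ⟨G, hGF, hRG⟩ := (hR a).zag C F hF hFi B h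
                    exact ih G F hGF (hv G hRG)
                · exact absurd trivial hFi

/-- The set of atoms derivable in a base. -/
def derivSet (B : Base) : Set ℕ := {p | Deriv B p}

/-- The canonical (maximally consistent, when `S ≠ univ`) base with derivable set `S`. -/
def MBase (S : Set ℕ) : Base := {r | r.2 ∈ S ∨ ¬ (↑r.1 : Set ℕ) ⊆ S}

theorem deriv_MBase {S : Set ℕ} {p : ℕ} : Deriv (MBase S) p ↔ p ∈ S := by
  constructor
  · intro h
    induction h with
    | step L q mem prem ih =>
      rcases mem with h | h
      · exact h
      · exact absurd (fun x hx => ih x hx) h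
  · intro hp
    exact Deriv.step ∅ p (Or.inl hp) (by simp)

theorem subset_MBase (B : Base) : B ⊆ MBase (derivSet B) := by
  rintro ⟨L, p⟩ hLp
  by_cases hL : (↑L : Set ℕ) ⊆ derivSet B
  · exact Or.inl (Deriv.step L p hLp (fun q hq => hL hq))
  · exact Or.inr hL

theorem maxcon_MBase {S : Set ℕ} (h : S ≠ Set.univ) : MaxCon (MBase S) := by
  obtain ⟨p, hp⟩ : ∃ p, p ∉ S := by
    by_contra hc
    push_neg at hc
    exact h (Set.eq_univ_of_forall hc)
  constructor
  · intro hinc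
    exact hp (deriv_MBase.mp (hinc p))
  · rintro ⟨L, q⟩
    by_cases hδ : (L, q) ∈ MBase S
    · exact Or.inl hδ
    · right
      have hq : q ∉ S ∧ (↑L : Set ℕ) ⊆ S := by
        by_contra hc
        apply hδ
        by_cases h1 : q ∈ S
        · exact Or.inl h1
        · exact Or.inr (fun hL => hc ⟨h1, hL⟩)
      have hqd : Deriv (insert (L, q) (MBase S)) q := by
        refine Deriv.step L q (Set.mem_insert _ _) (fun x hx => ?_)
        exact Deriv.step ∅ x (Set.mem_insert_iff.mpr (Or.inr (Or.inl (hq.2 hx)))) (by simp)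
      intro x
      refine Deriv.step {q} x (Set.mem_insert_iff.mpr (Or.inr (Or.inr ?_))) ?_
      · intro hsub
        exact hq.1 (hsub (by simp))
      · intro y hy
        simp only [Finset.mem_singleton] at hy
        exact hy ▸ hqd

theorem maxcon_superset {E G : Base} (hE : MaxCon E) (hEG : E ⊆ G)
    (hG : ¬ Inconsistent G) : G = E := by
  refine Set.Subset.antisymm (fun δ hδ => ?_) hEG
  rcases hE.2 δ with h | h
  · exact h
  · exact absurd (incon_mono (Set.insert_subset_iff.mpr ⟨hδ, hEG⟩) h) hG

theorem neg_valid_maxcon {A : Type} {R : A → Base → Base → Prop} {E : Base} {φ : Form A}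
    (hE : MaxCon E) (h : ¬ Valid R E φ) : Valid R E (φ.imp .bot) := by
  intro G hEG hφG
  by_cases hGi : Inconsistent G
  · exact hGi
  · have hGE := maxcon_superset hE hEG hGi
    rw [hGE] at hφG
    exact absurd hφG h

theorem s5_symm {r : Base → Base → Prop} (hr : S5Rel r) {B C : Base} (h : r B C) : r C B :=
  hr.eucl B C B h (hr.refl B)

theorem derivSet_ne_univ {B : Base} (hB : ¬ Inconsistent B) : derivSet B ≠ Set.univ := by
  intro h
  exact hB (fun p => (h ▸ Set.mem_univ p : p ∈ derivSet B))

theorem refine_maxcon {A : Type} {R : A → Base → Base → Prop} (hR : ∀ a, S5Rel (R a))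
    (φ : Form A) : ∀ B : Base, ¬ Valid R B φ →
      ∃ E, MaxCon E ∧ B ⊆ E ∧ ¬ Valid R E φ := by
  induction φ with
  | atom p =>
    intro B h
    have hBc : ¬ Inconsistent B := fun hi => h (hi p)
    refine ⟨MBase (derivSet B), maxcon_MBase (derivSet_ne_univ hBc), subset_MBase B, ?_⟩
    exact fun hd => h (deriv_MBase.mp hd)
  | bot =>
    intro B h
    have hBc : ¬ Inconsistent B := h
    obtain ⟨p, hp⟩ : ∃ p, ¬ Deriv B p := by
      by_contra hc; push_neg at hc; exact h hc
    refine ⟨MBase (derivSet B), maxcon_MBase (derivSet_ne_univ hBc), subset_MBase B, ?_⟩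
    intro hi
    exact hp (deriv_MBase.mp (hi p))
  | imp α β ihα ihβ =>
    intro B h
    have : ∃ F, B ⊆ F ∧ Valid R F α ∧ ¬ Valid R F β := by
      by_contra hc
      push_neg at hc
      exact h (fun F hBF hα => hc F hBF hα)
    obtain ⟨F, hBF, hα, hβ⟩ := this
    obtain ⟨E, hE, hFE, hEβ⟩ := ihβ F hβ
    exact ⟨E, hE, hBF.trans hFE,
      fun hv => hEβ (hv E subset_rfl (valid_mono hR α F E hFE hα))⟩
  | K a α ih =>
    intro B h
    have : ∃ F, R a B F ∧ ¬ Valid R F α := by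
      by_contra hc
      push_neg at hc
      exact h (fun F hBF => hc F hBF)
    obtain ⟨F, hBF, hα⟩ := this
    obtain ⟨E', hE', hFE', hE'α⟩ := ih F hα
    have hFB : R a F B := s5_symm (hR a) hBF
    obtain ⟨G, hBG, hE'G⟩ := (hR a).zig F B hFB E' hFE' hE'.1
    have hGcon : ¬ Inconsistent G := (hR a).con_succ E' hE'.1 G hE'G
    have hGE' : R a G E' := s5_symm (hR a) hE'G
    set M := MBase (derivSet G) with hM
    have hMmax : MaxCon M := maxcon_MBase (derivSet_ne_univ hGcon)
    obtain ⟨H, hE'H, hMH⟩ := (hR a).zig G E' hGE' M (subset_MBase G) hMmax.1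
    have hHcon : ¬ Inconsistent H := (hR a).con_succ M hMmax.1 H hMH
    have hHE' : H = E' := maxcon_superset hE' hE'H hHcon
    rw [hHE'] at hMH
    exact ⟨M, hMmax, hBG.trans (subset_MBase G),
      fun hv => hE'α (hv E' hMH)⟩

/-- Axiom (3): (φ→⊥)→(ψ→⊥) ⊩ ψ→φ. -/
theorem stmt11 {A : Type} (φ ψ : Form A) (R : A → Base → Base → Prop)
    (hR : ∀ a, S5Rel (R a)) (B : Base) :
    GammaValid R {(φ.imp .bot).imp (ψ.imp .bot)} B (ψ.imp φ) := by
  intro C hBC hΓ D hCD hψ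
  by_contra hφ
  obtain ⟨E, hE, hDE, hEφ⟩ := refine_maxcon hR φ D hφ
  have h1 : Valid R C ((φ.imp .bot).imp (ψ.imp .bot)) := hΓ _ rfl
  have hnφ : Valid R E (φ.imp .bot) := neg_valid_maxcon hE hEφ
  have hnψ : Valid R E (ψ.imp .bot) := h1 E (hCD.trans hDE) hnφ
  have hψE : Valid R E ψ := valid_mono hR ψ D E hDE hψ
  exact hE.1 (hnψ E subset_rfl hψE)
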